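/- Every oriented graph on 14 vertices that contains no independent set of size 4 and no transitive tournament on 3 vertices has at least 38 edges. -/

import Mathlib

/-- An oriented graph: no loops, at most one directed edge per pair
(asymmetry implies irreflexivity). -/
def IsOriented {V : Type*} (E : V → V → Prop) : Prop :=
  ∀ x y, E x y → ¬ E y x

/-- The graph contains an independent set of size `m`. -/
def HasIndep {V : Type*} (E : V → V → Prop) (m : ℕ) : Prop :=
  ∃ s : Finset V, s.card = m ∧ ∀ x ∈ s, ∀ y ∈ s, ¬ E x y

/-- The graph contains a transitive tournament on `n` vertices. -/
def HasTransTour {V : Type*} (E : V → V → Prop) (n : ℕ) : Prop :=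
  ∃ f : Fin n ↪ V, ∀ i j : Fin n, i < j → E (f i) (f j)

open Finset

section Aux

variable {V : Type*} [Fintype V] [DecidableEq V] {E : V → V → Prop} [DecidableRel E]

/-- Any E-independent finset has at most 3 elements. -/
lemma aux_indep_card_le (hI4 : ¬ HasIndep E 4) (s : Finset V)
    (h : ∀ x ∈ s, ∀ y ∈ s, ¬ E x y) : s.card ≤ 3 := by
  by_contra hc
  push_neg at hc
  obtain ⟨t, hts, htc⟩ := Finset.exists_subset_card_eq (s := s) (n := 4) (by omega)
  exact hI4 ⟨t, htc, fun x hx y hy => h x (hts hx) y (hts hy)⟩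

/-- In a TT3-free oriented graph, an adjacent triple with E x y is cyclic. -/
lemma aux_cyc (hL3 : ¬ ∃ a b c : V, E a b ∧ E b c ∧ E a c)
    {x y z : V} (hyz : E y z ∨ E z y) (hxz : E x z ∨ E z x) (hxy : E x y) :
    E y z ∧ E z x := by
  push_neg at hL3
  rcases hyz with h1 | h1
  · rcases hxz with h2 | h2
    · exact absurd (hL3 x y z) (by tauto)
    · exact ⟨h1, h2⟩
  · rcases hxz with h2 | h2
    · exact absurd (hL3 x z y) (by tauto)
    · exact absurd (hL3 z x y) (by tauto)

/-- Any pairwise-adjacent finset has at most 3 elements. -/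
lemma aux_clique_card_le (hor : IsOriented E)
    (hL3 : ¬ ∃ a b c : V, E a b ∧ E b c ∧ E a c) (s : Finset V)
    (h : ∀ x ∈ s, ∀ y ∈ s, x ≠ y → E x y ∨ E y x) : s.card ≤ 3 := by
  by_contra hc
  push_neg at hc
  obtain ⟨t, hts, htc⟩ := Finset.exists_subset_card_eq (s := s) (n := 4) (by omega)
  have hadj : ∀ x ∈ t, ∀ y ∈ t, x ≠ y → E x y ∨ E y x :=
    fun x hx y hy => h x (hts hx) y (hts hy)
  obtain ⟨a, ha⟩ : ∃ a, a ∈ t := Finset.card_pos.mp (by omega) |>.imp (fun _ h => h)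
  have h3 : (t.erase a).card = 3 := by
    have := Finset.card_erase_add_one ha; omega
  obtain ⟨b, c, d, hbc, hbd, hcd, habc⟩ := Finset.card_eq_three.mp h3
  have hb' : b ∈ t.erase a := by rw [habc]; simp
  have hc' : c ∈ t.erase a := by rw [habc]; simp
  have hd' : d ∈ t.erase a := by rw [habc]; simp
  have hab : a ≠ b := fun h => (Finset.mem_erase.mp hb').1 h.symm
  have hac : a ≠ c := fun h => (Finset.mem_erase.mp hc').1 h.symm
  have had : a ≠ d := fun h => (Finset.mem_erase.mp hd').1 h.symm
  have hb : b ∈ t := Finset.mem_of_mem_erase hb'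
  have hcm : c ∈ t := Finset.mem_of_mem_erase hc'
  have hdm : d ∈ t := Finset.mem_of_mem_erase hd'
  -- WLOG E a b
  have key : ∀ p q r s : V, p ≠ q → p ≠ r → p ≠ s → q ≠ r → q ≠ s → r ≠ s →
      p ∈ t → q ∈ t → r ∈ t → s ∈ t → E p q → False := by
    intro p q r s hpq hpr hps hqr hqs hrs hp hq hr hs hepq
    have h1 := aux_cyc hL3 (hadj q hq r hr hqr) (hadj p hp r hr hpr) hepq
    have h2 := aux_cyc hL3 (hadj q hq s hs hqs) (hadj p hp s hs hps) hepq
    have h3 := aux_cyc hL3 (hadj r hr s hs hrs) (hadj q hq s hs hqs) h1.1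
    exact hor q s h2.1 h3.2
  rcases hadj a ha b hb hab with h | h
  · exact key a b c d hab hac had hbc hbd hcd ha hb hcm hdm h
  · exact key b a c d (Ne.symm hab) hbc hbd hac had hcd hb ha hcm hdm h


variable (E)

/-- neighbours of `v` -/
def adjS (v : V) : Finset V := univ.filter (fun w => E v w ∨ E w v)
/-- out-neighbours of `v` (within `univ.erase v`) -/
def aS (v : V) : Finset V := (univ.erase v).filter (fun w => E v w)
/-- in-neighbours of `v` -/
def bS (v : V) : Finset V := (univ.erase v).filter (fun w => ¬ E v w ∧ E w v)
/-- non-neighbours of `v` -/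
def nonS (v : V) : Finset V := (univ.erase v).filter (fun w => ¬ E v w ∧ ¬ E w v)

variable {E}

lemma aux_split (s : Finset V) (p q : V → Prop) [DecidablePred p] [DecidablePred q] :
    (s.filter q).card = ((s.filter p).filter q).card +
      ((s.filter (fun x => ¬ p x)).filter q).card := by
  rw [Finset.filter_comm, Finset.filter_comm (fun x => ¬ p x) q,
    Finset.card_filter_add_card_filter_not]

lemma hor_irrefl (hor : IsOriented E) (x : V) : ¬ E x x := fun h => hor x x h h

lemma partition13 (v : V) :
    (univ.erase v).card = (aS E v).card + (bS E v).card + (nonS E v).card := by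
  rw [← Finset.card_filter_add_card_filter_not (s := univ.erase v) (p := fun w => E v w)]
  rw [← Finset.card_filter_add_card_filter_not
    (s := (univ.erase v).filter (fun w => ¬ E v w)) (p := fun w => E w v)]
  rw [Finset.filter_filter, Finset.filter_filter]
  simp only [aS, bS, nonS]
  omega

lemma adjS_card (hor : IsOriented E) (v : V) :
    (adjS E v).card = (aS E v).card + (bS E v).card := by
  have h1 : adjS E v = (univ.erase v).filter (fun w => E v w ∨ E w v) := by
    ext w
    simp only [adjS, Finset.mem_filter, Finset.mem_erase, Finset.mem_univ, true_and]
    constructor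
    · intro h
      have : w ≠ v := by rintro rfl; rcases h with h | h <;> exact hor_irrefl hor w h
      tauto
    · tauto
  rw [h1, aux_split (p := fun w => E v w)]
  congr 1
  · congr 1
    rw [Finset.filter_filter]
    unfold aS
    apply Finset.filter_congr
    intro x _
    tauto
  · congr 1
    rw [Finset.filter_filter]
    unfold bS
    apply Finset.filter_congr
    intro x _
    tauto

lemma aS_indep (hor : IsOriented E) (hL3 : ¬ ∃ a b c : V, E a b ∧ E b c ∧ E a c) (v : V) :
    ∀ x ∈ aS E v, ∀ y ∈ aS E v, ¬ E x y := by
  intro x hx y hy hxy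
  simp only [aS, Finset.mem_filter, Finset.mem_erase] at hx hy
  exact hL3 ⟨v, x, y, hx.2, hxy, hy.2⟩

lemma bS_indep (hor : IsOriented E) (hL3 : ¬ ∃ a b c : V, E a b ∧ E b c ∧ E a c) (v : V) :
    ∀ x ∈ bS E v, ∀ y ∈ bS E v, ¬ E x y := by
  intro x hx y hy hxy
  simp only [bS, Finset.mem_filter, Finset.mem_erase] at hx hy
  exact hL3 ⟨x, y, v, hxy, hy.2.2, hx.2.2⟩

lemma v_not_mem_nonS (v : V) : v ∉ nonS E v := by
  simp [nonS]

lemma mem_nonS {v w : V} (h : w ∈ nonS E v) : w ≠ v ∧ ¬ E v w ∧ ¬ E w v := by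
  simp only [nonS, Finset.mem_filter, Finset.mem_erase, Finset.mem_univ, true_and] at h
  exact ⟨h.1.1, h.2⟩

lemma nonS_struct (hor : IsOriented E) (hI4 : ¬ HasIndep E 4)
    (hL3 : ¬ ∃ a b c : V, E a b ∧ E b c ∧ E a c) {v u : V} (hu : u ∈ nonS E v) :
    ((nonS E v).filter (fun w => E u w ∨ E w u)).card ≤ 4 ∧
    (nonS E v).card ≤ ((nonS E v).filter (fun w => E u w ∨ E w u)).card + 4 := by
  have hvM : v ∉ nonS E v := v_not_mem_nonS v
  set M := nonS E v with hMdef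
  set s := M.erase u with hs
  have hsub : ∀ w ∈ s, w ∈ M := fun w hw => Finset.mem_of_mem_erase hw
  -- c1 : out-neighbours of u inside M
  have hc1 : (s.filter (fun w => E u w)).card ≤ 2 := by
    have hvnot : v ∉ s.filter (fun w => E u w) :=
      fun h => hvM (hsub v (Finset.mem_filter.mp h).1)
    have hindep : ∀ x ∈ insert v (s.filter (fun w => E u w)),
        ∀ y ∈ insert v (s.filter (fun w => E u w)), ¬ E x y := by
      intro x hx y hy
      rcases Finset.mem_insert.mp hx with rfl | hx <;>
        rcases Finset.mem_insert.mp hy with rfl | hy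
      · exact hor_irrefl hor _
      · exact (mem_nonS (hsub y (Finset.mem_filter.mp hy).1)).2.1
      · exact (mem_nonS (hsub x (Finset.mem_filter.mp hx).1)).2.2
      · intro hxy
        exact hL3 ⟨u, x, y, (Finset.mem_filter.mp hx).2, hxy, (Finset.mem_filter.mp hy).2⟩
    have := aux_indep_card_le hI4 _ hindep
    rw [Finset.card_insert_of_notMem hvnot] at this
    omega
  -- c2 : in-neighbours of u inside M
  have hc2 : (s.filter (fun w => ¬ E u w ∧ E w u)).card ≤ 2 := by
    have hvnot : v ∉ s.filter (fun w => ¬ E u w ∧ E w u) :=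
      fun h => hvM (hsub v (Finset.mem_filter.mp h).1)
    have hindep : ∀ x ∈ insert v (s.filter (fun w => ¬ E u w ∧ E w u)),
        ∀ y ∈ insert v (s.filter (fun w => ¬ E u w ∧ E w u)), ¬ E x y := by
      intro x hx y hy
      rcases Finset.mem_insert.mp hx with rfl | hx <;>
        rcases Finset.mem_insert.mp hy with rfl | hy
      · exact hor_irrefl hor _
      · exact (mem_nonS (hsub y (Finset.mem_filter.mp hy).1)).2.1
      · exact (mem_nonS (hsub x (Finset.mem_filter.mp hx).1)).2.2
      · intro hxy
        exact hL3 ⟨x, y, u, hxy, (Finset.mem_filter.mp hy).2.2, (Finset.mem_filter.mp hx).2.2⟩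
    have := aux_indep_card_le hI4 _ hindep
    rw [Finset.card_insert_of_notMem hvnot] at this
    omega
  -- c3 : non-neighbours of u inside M form a tournament
  have hc3 : (s.filter (fun w => ¬ E u w ∧ ¬ E w u)).card ≤ 3 := by
    apply aux_clique_card_le hor hL3
    intro x hx y hy hxy
    by_contra hno
    push_neg at hno
    have hxM := hsub x (Finset.mem_filter.mp hx).1
    have hyM := hsub y (Finset.mem_filter.mp hy).1
    have hxu : x ≠ u := (Finset.mem_erase.mp (Finset.mem_filter.mp hx).1).1
    have hyu : y ≠ u := (Finset.mem_erase.mp (Finset.mem_filter.mp hy).1).1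
    have hxv := mem_nonS hxM
    have hyv := mem_nonS hyM
    have huv := mem_nonS hu
    have hux := (Finset.mem_filter.mp hx).2
    have huy := (Finset.mem_filter.mp hy).2
    have hcard4 : (insert v (insert u ({x, y} : Finset V))).card = 4 := by
      rw [Finset.card_insert_of_notMem, Finset.card_insert_of_notMem, Finset.card_pair hxy]
      · simp only [Finset.mem_insert, Finset.mem_singleton]
        push_neg
        exact ⟨Ne.symm hxu, Ne.symm hyu⟩
      · simp only [Finset.mem_insert, Finset.mem_singleton]
        push_neg
        exact ⟨Ne.symm huv.1, Ne.symm hxv.1, Ne.symm hyv.1⟩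
    have hindep : ∀ p ∈ insert v (insert u ({x, y} : Finset V)),
        ∀ q ∈ insert v (insert u ({x, y} : Finset V)), ¬ E p q := by
      have i1 := hor_irrefl hor v
      have i2 := hor_irrefl hor u
      have i3 := hor_irrefl hor x
      have i4 := hor_irrefl hor y
      intro p hp q hq
      simp only [Finset.mem_insert, Finset.mem_singleton] at hp hq
      rcases hp with rfl | rfl | rfl | rfl <;> rcases hq with rfl | rfl | rfl | rfl <;>
        tauto
    have := aux_indep_card_le hI4 _ hindep
    omega
  -- partition of s
  have hpart : s.card = (s.filter (fun w => E u w)).card +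
      (s.filter (fun w => ¬ E u w ∧ E w u)).card +
      (s.filter (fun w => ¬ E u w ∧ ¬ E w u)).card := by
    rw [← Finset.card_filter_add_card_filter_not (s := s) (p := fun w => E u w),
      ← Finset.card_filter_add_card_filter_not
        (s := s.filter (fun w => ¬ E u w)) (p := fun w => E w u),
      Finset.filter_filter, Finset.filter_filter]
    omega
  have hMcard : M.card = s.card + 1 := (Finset.card_erase_add_one hu).symm
  -- the adjacency filter over M equals over s, and splits as c1 + c2
  have hadjcard : (M.filter (fun w => E u w ∨ E w u)).card =
      (s.filter (fun w => E u w)).card + (s.filter (fun w => ¬ E u w ∧ E w u)).card := by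
    have hMs : M.filter (fun w => E u w ∨ E w u) = s.filter (fun w => E u w ∨ E w u) := by
      ext w
      simp only [hs, Finset.mem_filter, Finset.mem_erase]
      constructor
      · rintro ⟨hwM, hP⟩
        refine ⟨⟨?_, hwM⟩, hP⟩
        rintro rfl
        rcases hP with h | h <;> exact hor_irrefl hor _ h
      · tauto
    rw [hMs, aux_split s (fun w => E u w) (fun w => E u w ∨ E w u)]
    congr 1
    · rw [Finset.filter_filter]
      congr 1
      apply Finset.filter_congr
      intro w _
      tauto
    · rw [Finset.filter_filter]
      congr 1
      apply Finset.filter_congr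
      intro w _
      tauto
  constructor
  · omega
  · omega

lemma cover3 (hor : IsOriented E) (hI4 : ¬ HasIndep E 4) (P M : Finset V)
    (hP : ∀ x ∈ P, ∀ y ∈ P, ¬ E x y) (hPM : ∀ x ∈ M, x ∉ P) (hPcard : P.card = 3) :
    M.card ≤ ∑ x ∈ P, (M.filter (fun w => E x w ∨ E w x)).card := by
  have hsub : M ⊆ P.biUnion (fun x => M.filter (fun w => E x w ∨ E w x)) := by
    intro u hu
    rw [Finset.mem_biUnion]
    by_contra hnot
    push_neg at hnot
    have hind : ∀ x ∈ insert u P, ∀ y ∈ insert u P, ¬ E x y := by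
      intro x hx y hy
      rcases Finset.mem_insert.mp hx with hx1 | hx1 <;>
        rcases Finset.mem_insert.mp hy with hy1 | hy1
      · rw [hx1, hy1]; exact hor_irrefl hor _
      · rw [hx1]; have := hnot y hy1; rw [Finset.mem_filter] at this; tauto
      · rw [hy1]; have := hnot x hx1; rw [Finset.mem_filter] at this; tauto
      · exact hP x hx1 y hy1
    have h3 := aux_indep_card_le hI4 _ hind
    rw [Finset.card_insert_of_notMem (hPM u hu)] at h3
    omega
  calc M.card ≤ (P.biUnion (fun x => M.filter (fun w => E x w ∨ E w x))).card :=
        Finset.card_le_card hsub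
    _ ≤ _ := Finset.card_biUnion_le

lemma pair2 (hor : IsOriented E) (hI4 : ¬ HasIndep E 4)
    (hL3 : ¬ ∃ a b c : V, E a b ∧ E b c ∧ E a c) (a₁ a₂ : V) (M : Finset V) (hne : a₁ ≠ a₂)
    (h12 : ¬ E a₁ a₂) (h21 : ¬ E a₂ a₁)
    (hd1 : ∀ u ∈ M, u ≠ a₁) (hd2 : ∀ u ∈ M, u ≠ a₂) :
    M.card ≤ 3 + (M.filter (fun w => E a₁ w ∨ E w a₁)).card
      + (M.filter (fun w => E a₂ w ∨ E w a₂)).card := by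
  set C := M.filter (fun w => ¬ (E a₁ w ∨ E w a₁) ∧ ¬ (E a₂ w ∨ E w a₂)) with hC
  have hCc : C.card ≤ 3 := by
    apply aux_clique_card_le hor hL3
    intro x hx y hy hxy
    by_contra hno
    push_neg at hno
    have hx' := Finset.mem_filter.mp hx
    have hy' := Finset.mem_filter.mp hy
    have hcard4 : (insert a₁ (insert a₂ ({x, y} : Finset V))).card = 4 := by
      rw [Finset.card_insert_of_notMem, Finset.card_insert_of_notMem, Finset.card_pair hxy]
      · simp only [Finset.mem_insert, Finset.mem_singleton]
        push_neg
        exact ⟨Ne.symm (hd2 x hx'.1), Ne.symm (hd2 y hy'.1)⟩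
      · simp only [Finset.mem_insert, Finset.mem_singleton]
        push_neg
        exact ⟨hne, Ne.symm (hd1 x hx'.1), Ne.symm (hd1 y hy'.1)⟩
    have hind : ∀ p ∈ insert a₁ (insert a₂ ({x, y} : Finset V)),
        ∀ q ∈ insert a₁ (insert a₂ ({x, y} : Finset V)), ¬ E p q := by
      have i1 := hor_irrefl hor a₁
      have i2 := hor_irrefl hor a₂
      have i3 := hor_irrefl hor x
      have i4 := hor_irrefl hor y
      have e1 := hx'.2.1
      have e2 := hx'.2.2
      have e3 := hy'.2.1
      have e4 := hy'.2.2
      intro p hp q hq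
      simp only [Finset.mem_insert, Finset.mem_singleton] at hp hq
      rcases hp with rfl | rfl | rfl | rfl <;> rcases hq with rfl | rfl | rfl | rfl <;> tauto
    have := aux_indep_card_le hI4 _ hind
    omega
  have hcov : M ⊆ C ∪ M.filter (fun w => E a₁ w ∨ E w a₁)
      ∪ M.filter (fun w => E a₂ w ∨ E w a₂) := by
    intro u hu
    simp only [Finset.mem_union, hC, Finset.mem_filter]
    by_cases h1 : E a₁ u ∨ E u a₁
    · tauto
    · by_cases h2 : E a₂ u ∨ E u a₂ <;> tauto
  have hc1 := Finset.card_le_card hcov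
  have hc2 := Finset.card_union_le (C ∪ M.filter (fun w => E a₁ w ∨ E w a₁))
    (M.filter (fun w => E a₂ w ∨ E w a₂))
  have hc3 := Finset.card_union_le C (M.filter (fun w => E a₁ w ∨ E w a₁))
  omega

lemma dc (s t : Finset V) :
    ∑ u ∈ s, (t.filter (fun w => E u w ∨ E w u)).card
      = ∑ x ∈ t, (s.filter (fun w => E x w ∨ E w x)).card := by
  simp only [Finset.card_filter]
  rw [Finset.sum_comm]
  refine Finset.sum_congr rfl fun x _ => Finset.sum_congr rfl fun y _ => ?_
  exact if_congr or_comm rfl rfl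

end Aux

theorem stmt10 {V : Type*} [Fintype V] (E : V → V → Prop)
    (hcard : Fintype.card V = 14)
    (hor : IsOriented E)
    (hI4 : ¬ HasIndep E 4)
    (hL3 : ¬ ∃ a b c : V, E a b ∧ E b c ∧ E a c) :
    38 ≤ Nat.card {p : V × V // E p.1 p.2} := by
  haveI : DecidableEq V := Classical.decEq V
  haveI : DecidableRel E := fun _ _ => Classical.propDecidable _
  have hu14 : (univ : Finset V).card = 14 := by rw [Finset.card_univ, hcard]
  have herase : ∀ v : V, (univ.erase v).card = 13 := by
    intro v
    rw [Finset.card_erase_of_mem (Finset.mem_univ v), hu14]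
  have haS3 : ∀ v, (aS E v).card ≤ 3 :=
    fun v => aux_indep_card_le hI4 _ (aS_indep hor hL3 v)
  have hbS3 : ∀ v, (bS E v).card ≤ 3 :=
    fun v => aux_indep_card_le hI4 _ (bS_indep hor hL3 v)
  have hnon8 : ∀ v, (nonS E v).card ≤ 8 := by
    intro v
    rcases Finset.eq_empty_or_nonempty (nonS E v) with h | ⟨u, hu⟩
    · rw [h]; simp
    · have := nonS_struct hor hI4 hL3 hu; omega
  have hdeg13 : ∀ v, (adjS E v).card + (nonS E v).card = 13 := by
    intro v
    have h1 := partition13 (E := E) v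
    have h2 := adjS_card hor v
    have h3 := herase v
    omega
  have hdeg_ge : ∀ v, 5 ≤ (adjS E v).card := by
    intro v; have := hdeg13 v; have := hnon8 v; omega
  have hdeg_le : ∀ v, (adjS E v).card ≤ 6 := by
    intro v; have := adjS_card hor v; have := haS3 v; have := hbS3 v; omega
  by_contra hlt
  push_neg at hlt
  have hee : Nat.card {p : V × V // E p.1 p.2}
      = (Finset.univ.filter (fun p : V × V => E p.1 p.2)).card := by
    rw [Nat.card_eq_fintype_card, Fintype.card_subtype]
  rw [hee] at hlt
  have hsum_out : ∑ v : V, (univ.filter (fun w => E v w)).card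
      = (Finset.univ.filter (fun p : V × V => E p.1 p.2)).card := by
    rw [Finset.card_filter, ← Finset.univ_product_univ, Finset.sum_product]
    refine Finset.sum_congr rfl fun x _ => ?_
    rw [Finset.card_filter]
  have hsum_in : ∑ v : V, (univ.filter (fun w => E w v)).card
      = (Finset.univ.filter (fun p : V × V => E p.1 p.2)).card := by
    rw [Finset.card_filter, ← Finset.univ_product_univ, Finset.sum_product, Finset.sum_comm]
    refine Finset.sum_congr rfl fun x _ => ?_
    rw [Finset.card_filter]
  have hdeg_split : ∀ v, (adjS E v).card =
      (univ.filter (fun w => E v w)).card + (univ.filter (fun w => E w v)).card := by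
    intro v
    unfold adjS
    rw [aux_split univ (fun w => E v w) (fun w => E v w ∨ E w v)]
    congr 1
    · rw [Finset.filter_filter]
      congr 1
      apply Finset.filter_congr
      intro w _
      tauto
    · rw [Finset.filter_filter]
      congr 1
      apply Finset.filter_congr
      intro w _
      have h1 := hor v w
      have h2 := hor w v
      tauto
  have h2e : ∑ v : V, (adjS E v).card
      = 2 * (Finset.univ.filter (fun p : V × V => E p.1 p.2)).card := by
    rw [Finset.sum_congr rfl fun v _ => hdeg_split v, Finset.sum_add_distrib,
      hsum_out, hsum_in]
    omega
  -- at least 10 vertices of degree 5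
  have hD5card : 10 ≤ (univ.filter (fun v => (adjS E v).card = 5)).card := by
    have hsplit := Finset.sum_filter_add_sum_filter_not univ
      (fun v => (adjS E v).card = 5) (fun v => (adjS E v).card)
    have h1 : ∑ v ∈ univ.filter (fun v => (adjS E v).card = 5), (adjS E v).card
        = 5 * (univ.filter (fun v => (adjS E v).card = 5)).card := by
      rw [Finset.sum_congr rfl (fun v hv => (Finset.mem_filter.mp hv).2),
        Finset.sum_const, smul_eq_mul, mul_comm]
    have h2 : ∑ v ∈ univ.filter (fun v => ¬ (adjS E v).card = 5), (adjS E v).card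
        = 6 * (univ.filter (fun v => ¬ (adjS E v).card = 5)).card := by
      rw [Finset.sum_congr rfl (fun v hv => ?_), Finset.sum_const, smul_eq_mul, mul_comm]
      have h5 := hdeg_ge v
      have h6 := hdeg_le v
      have h7 := (Finset.mem_filter.mp hv).2
      omega
    have hcards := Finset.card_filter_add_card_filter_not (s := univ)
      (p := fun v => (adjS E v).card = 5)
    rw [hu14] at hcards
    rw [h1, h2, h2e] at hsplit
    omega
  obtain ⟨v, hv5⟩ : ∃ v, (adjS E v).card = 5 := by
    have hpos : (univ.filter (fun v => (adjS E v).card = 5)).Nonempty :=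
      Finset.card_pos.mp (by omega)
    obtain ⟨v, hv⟩ := hpos
    exact ⟨v, (Finset.mem_filter.mp hv).2⟩
  have hM8 : (nonS E v).card = 8 := by have := hdeg13 v; omega
  have hABcard : (aS E v).card + (bS E v).card = 5 := by
    have := adjS_card hor v; omega
  have hM4 : ∀ u ∈ nonS E v, ((nonS E v).filter (fun w => E u w ∨ E w u)).card = 4 := by
    intro u hu
    have := nonS_struct hor hI4 hL3 hu
    omega
  have hMA : ∀ x ∈ nonS E v, x ∉ aS E v := by
    intro x hx hxA
    exact (mem_nonS hx).2.1 (Finset.mem_filter.mp hxA).2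
  have hMB : ∀ x ∈ nonS E v, x ∉ bS E v := by
    intro x hx hxB
    exact (mem_nonS hx).2.2 (Finset.mem_filter.mp hxB).2.2
  -- three-way split of the punctured universe, relative to adjacency with u
  have hsplit3 : ∀ u : V, ((univ.erase v).filter (fun w => E u w ∨ E w u)).card
      = ((aS E v).filter (fun w => E u w ∨ E w u)).card
        + ((bS E v).filter (fun w => E u w ∨ E w u)).card
        + ((nonS E v).filter (fun w => E u w ∨ E w u)).card := by
    intro u
    have hU : (univ.erase v).filter (fun w => E u w ∨ E w u)
        = (aS E v).filter (fun w => E u w ∨ E w u)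
          ∪ (bS E v).filter (fun w => E u w ∨ E w u)
          ∪ (nonS E v).filter (fun w => E u w ∨ E w u) := by
      ext w
      simp only [Finset.mem_union, Finset.mem_filter, aS, bS, nonS]
      tauto
    have hdAB : Disjoint ((aS E v).filter (fun w => E u w ∨ E w u))
        ((bS E v).filter (fun w => E u w ∨ E w u)) := by
      rw [Finset.disjoint_left]
      intro x hx hx'
      exact (Finset.mem_filter.mp (Finset.mem_filter.mp hx').1).2.1
        (Finset.mem_filter.mp (Finset.mem_filter.mp hx).1).2
    have hdABM : Disjoint ((aS E v).filter (fun w => E u w ∨ E w u)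
          ∪ (bS E v).filter (fun w => E u w ∨ E w u))
        ((nonS E v).filter (fun w => E u w ∨ E w u)) := by
      rw [Finset.disjoint_left]
      intro x hx hx'
      have hxn := mem_nonS (Finset.mem_filter.mp hx').1
      rcases Finset.mem_union.mp hx with h | h
      · exact hxn.2.1 (Finset.mem_filter.mp (Finset.mem_filter.mp h).1).2
      · exact hxn.2.2 (Finset.mem_filter.mp (Finset.mem_filter.mp h).1).2.2
    rw [hU, Finset.card_union_of_disjoint hdABM, Finset.card_union_of_disjoint hdAB]
  -- degree decomposition for u ∈ M
  have hdegM : ∀ u ∈ nonS E v, (adjS E u).card =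
      ((aS E v).filter (fun w => E u w ∨ E w u)).card
      + ((bS E v).filter (fun w => E u w ∨ E w u)).card + 4 := by
    intro u hu
    have huv := mem_nonS hu
    have h0 : adjS E u = (univ.erase v).filter (fun w => E u w ∨ E w u) := by
      ext w
      simp only [adjS, Finset.mem_filter, Finset.mem_erase, Finset.mem_univ, true_and]
      constructor
      · intro h
        have hwv : w ≠ v := by
          rintro rfl
          rcases h with h | h
          · exact huv.2.2 h
          · exact huv.2.1 h
        tauto
      · tauto
    rw [h0, hsplit3 u, hM4 u hu]
  -- upper bound for the M-N edge count
  have hupper : ∑ u ∈ nonS E v, (((aS E v).filter (fun w => E u w ∨ E w u)).card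
      + ((bS E v).filter (fun w => E u w ∨ E w u)).card) ≤ 12 := by
    have hK4 : 4 ≤ ((nonS E v).filter (fun u => (adjS E u).card = 5)).card := by
      have hsub : univ.filter (fun x => (adjS E x).card = 5)
          ⊆ (nonS E v).filter (fun u => (adjS E u).card = 5) ∪ (univ \ nonS E v) := by
        intro x hx
        rw [Finset.mem_union]
        by_cases hxM : x ∈ nonS E v
        · left
          exact Finset.mem_filter.mpr ⟨hxM, (Finset.mem_filter.mp hx).2⟩
        · right
          exact Finset.mem_sdiff.mpr ⟨Finset.mem_univ x, hxM⟩
      have h1 := Finset.card_le_card hsub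
      have h2 := Finset.card_union_le ((nonS E v).filter (fun u => (adjS E u).card = 5))
        (univ \ nonS E v)
      have h3 : (univ \ nonS E v).card = 14 - (nonS E v).card := by
        rw [Finset.card_sdiff_of_subset (Finset.subset_univ (nonS E v)), hu14]
      omega
    have hsplitM := Finset.sum_filter_add_sum_filter_not (nonS E v)
      (fun u => (adjS E u).card = 5)
      (fun u => (((aS E v).filter (fun w => E u w ∨ E w u)).card
        + ((bS E v).filter (fun w => E u w ∨ E w u)).card))
    have hle1 := Finset.sum_le_card_nsmul ((nonS E v).filter (fun u => (adjS E u).card = 5))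
      (fun u => (((aS E v).filter (fun w => E u w ∨ E w u)).card
        + ((bS E v).filter (fun w => E u w ∨ E w u)).card)) 1
      (fun u hu => by
        have hu' := Finset.mem_filter.mp hu
        have hd := hdegM u hu'.1
        have h5 := hu'.2
        beta_reduce
        omega)
    have hle2 := Finset.sum_le_card_nsmul ((nonS E v).filter (fun u => ¬ (adjS E u).card = 5))
      (fun u => (((aS E v).filter (fun w => E u w ∨ E w u)).card
        + ((bS E v).filter (fun w => E u w ∨ E w u)).card)) 2
      (fun u hu => by
        have hu' := Finset.mem_filter.mp hu
        have hd := hdegM u hu'.1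
        have h6 := hdeg_le u
        beta_reduce
        omega)
    rw [smul_eq_mul] at hle1 hle2
    have hcards := Finset.card_filter_add_card_filter_not (s := nonS E v)
      (p := fun u => (adjS E u).card = 5)
    omega
  -- lower bound
  have hAind := aS_indep hor hL3 v
  have hBind := bS_indep hor hL3 v
  have hdc : ∑ u ∈ nonS E v, (((aS E v).filter (fun w => E u w ∨ E w u)).card
      + ((bS E v).filter (fun w => E u w ∨ E w u)).card)
      = ∑ x ∈ aS E v, ((nonS E v).filter (fun w => E x w ∨ E w x)).card
        + ∑ x ∈ bS E v, ((nonS E v).filter (fun w => E x w ∨ E w x)).card := by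
    rw [Finset.sum_add_distrib, dc (nonS E v) (aS E v), dc (nonS E v) (bS E v)]
  have hpairbound : ∀ Q : Finset V, Q.card = 2 → (∀ x ∈ Q, ∀ y ∈ Q, ¬ E x y) →
      (∀ x ∈ nonS E v, x ∉ Q) →
      5 ≤ ∑ x ∈ Q, ((nonS E v).filter (fun w => E x w ∨ E w x)).card := by
    intro Q hQ2 hQind hMQ
    obtain ⟨b₁, b₂, hbne, hQeq⟩ := Finset.card_eq_two.mp hQ2
    have hb1 : b₁ ∈ Q := by rw [hQeq]; simp
    have hb2 : b₂ ∈ Q := by rw [hQeq]; simp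
    have hp := pair2 hor hI4 hL3 b₁ b₂ (nonS E v) hbne (hQind b₁ hb1 b₂ hb2)
      (hQind b₂ hb2 b₁ hb1)
      (fun u hu h => hMQ u hu (h ▸ hb1)) (fun u hu h => hMQ u hu (h ▸ hb2))
    rw [hQeq, Finset.sum_pair hbne]
    omega
  have htriplebound : ∀ P : Finset V, P.card = 3 → (∀ x ∈ P, ∀ y ∈ P, ¬ E x y) →
      (∀ x ∈ nonS E v, x ∉ P) →
      8 ≤ ∑ x ∈ P, ((nonS E v).filter (fun w => E x w ∨ E w x)).card := by
    intro P hP3 hPind hMP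
    have := cover3 hor hI4 P (nonS E v) hPind hMP hP3
    omega
  have hcase : ((aS E v).card = 3 ∧ (bS E v).card = 2)
      ∨ ((aS E v).card = 2 ∧ (bS E v).card = 3) := by
    have := haS3 v
    have := hbS3 v
    omega
  have hlower : 13 ≤ ∑ u ∈ nonS E v, (((aS E v).filter (fun w => E u w ∨ E w u)).card
      + ((bS E v).filter (fun w => E u w ∨ E w u)).card) := by
    rw [hdc]
    rcases hcase with ⟨hA3, hB2⟩ | ⟨hA2, hB3⟩
    · have h1 := htriplebound (aS E v) hA3 hAind hMA
      have h2 := hpairbound (bS E v) hB2 hBind hMB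
      omega
    · have h1 := hpairbound (aS E v) hA2 hAind hMA
      have h2 := htriplebound (bS E v) hB3 hBind hMB
      omega
  omega
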